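/- For m > 0 and L > 0 with Lm ≥ 1, the free massive Casimir energy density integrand satisfies: the function p ↦ p² log(1 - e^{-L√(p²+m²)}) is integrable on [0, ∞), and ∫_0^∞ p² |log(1 - e^{-L√(p²+m²)})| dp ≤ C(m) e^{-Lm}·(1 + 1/L + 1/L² + 1/L³) for an explicit constant C(m). -/

import Mathlib

open Real MeasureTheory Set Filter Topology

lemma casimir_aux_keyint (L m : ℝ) (hL : 0 < L) :
    IntegrableOn (fun p : ℝ => p ^ 2 * Real.exp (-(L * p))) (Set.Ioi m) ∧
    (∫ p in Set.Ioi m, p ^ 2 * Real.exp (-(L * p)))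
      = (m ^ 2 / L + 2 * m / L ^ 2 + 2 / L ^ 3) * Real.exp (-(L * m)) := by
  have hL' : L ≠ 0 := hL.ne'
  set F : ℝ → ℝ := fun p => -((p ^ 2 / L + 2 * p / L ^ 2 + 2 / L ^ 3) * Real.exp (-(L * p)))
    with hF
  have hderiv : ∀ x ∈ Set.Ici m, HasDerivAt F (x ^ 2 * Real.exp (-(L * x))) x := by
    intro x _
    have h1 : HasDerivAt (fun p : ℝ => p ^ 2 / L + 2 * p / L ^ 2 + 2 / L ^ 3)
        (2 * x / L + 2 / L ^ 2) x := by
      have := (((hasDerivAt_pow 2 x).div_const L).add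
        (((hasDerivAt_id x).const_mul 2).div_const (L ^ 2))).add_const (2 / L ^ 3)
      exact this.congr_deriv (by norm_num)
    have h2 : HasDerivAt (fun p : ℝ => Real.exp (-(L * p))) (-L * Real.exp (-(L * x))) x := by
      have : HasDerivAt (fun p : ℝ => -(L * p)) (-L) x := by
        exact ((hasDerivAt_id x).const_mul L).neg.congr_deriv (by ring)
      exact ((Real.hasDerivAt_exp (-(L * x))).comp x this).congr_deriv
        (by ring : _ = -L * Real.exp (-(L * x)))
    have := (h1.mul h2).neg
    refine this.congr_deriv ?_
    field_simp
    ring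
  have htend : Tendsto F atTop (𝓝 0) := by
    have h0 : Tendsto (fun x : ℝ => -((x ^ 2 + 2 * x + 2) * Real.exp (-x)) / L ^ 3)
        atTop (𝓝 0) := by
      have a1 := tendsto_pow_mul_exp_neg_atTop_nhds_zero 2
      have a2 := tendsto_pow_mul_exp_neg_atTop_nhds_zero 1
      have a3 := tendsto_exp_neg_atTop_nhds_zero
      have h : Tendsto (fun x : ℝ => -((x ^ 2 * Real.exp (-x)) + 2 * (x ^ 1 * Real.exp (-x))
          + 2 * Real.exp (-x)) / L ^ 3) atTop (𝓝 (-((0:ℝ) + 2 * 0 + 2 * 0) / L ^ 3)) := by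
        exact (((a1.add (a2.const_mul 2)).add (a3.const_mul 2)).neg).div_const (L ^ 3)
      simp only [mul_zero, add_zero, zero_add, neg_zero, zero_div] at h
      refine h.congr fun x => ?_
      ring
    have hcomp : Tendsto (fun p : ℝ => L * p) atTop atTop :=
      Tendsto.const_mul_atTop hL tendsto_id
    have h2 := h0.comp hcomp
    refine h2.congr fun p => ?_
    simp only [Function.comp, hF]
    field_simp
  constructor
  · exact integrableOn_Ioi_deriv_of_nonneg' hderiv (fun x _ => by positivity) htend
  · rw [integral_Ioi_of_hasDerivAt_of_nonneg' hderiv (fun x _ => by positivity) htend]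
    simp only [hF]
    ring

lemma casimir_aux_log_bound {u : ℝ} (h0 : 0 ≤ u) (h1 : u ≤ 1 / 2) :
    |Real.log (1 - u)| ≤ 2 * u := by
  have h2 : (0:ℝ) < 1 - u := by linarith
  have hle : Real.log (1 - u) ≤ 0 := Real.log_nonpos (by linarith) (by linarith)
  rw [abs_of_nonpos hle]
  have h5 := Real.log_le_sub_one_of_pos (x := (1 - u)⁻¹) (by positivity)
  rw [Real.log_inv] at h5
  have h3 : (1 - u)⁻¹ - 1 = u / (1 - u) := by field_simp; ring
  have h4 : u / (1 - u) ≤ 2 * u := by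
    rw [div_le_iff₀ h2]; nlinarith
  linarith [h3 ▸ h5]

/-- For a massive mode, the uncut-off Casimir integrand `p² log(1 - e^{-L√(p²+m²)})`
is integrable on `[0,∞)` and its absolute integral decays exponentially in `L`:
`∫_0^∞ p²|log(1-e^{-L√(p²+m²)})| dp ≤ C(m)·e^{-Lm}(1 + 1/L + 1/L² + 1/L³)`. -/
theorem casimir_massive_integrable_and_exponential_decay (m : ℝ) (hm : 0 < m) :
    ∃ C : ℝ, 0 < C ∧ ∀ L : ℝ, 0 < L → 1 ≤ L * m →
      IntegrableOn
        (fun p : ℝ => p ^ 2 * Real.log (1 - Real.exp (-(L * Real.sqrt (p ^ 2 + m ^ 2)))))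
        (Set.Ici 0) ∧
      (∫ p in Set.Ici (0:ℝ),
          p ^ 2 * |Real.log (1 - Real.exp (-(L * Real.sqrt (p ^ 2 + m ^ 2))))|) ≤
        C * Real.exp (-(L * m)) * (1 + 1 / L + 1 / L ^ 2 + 1 / L ^ 3) := by
  set C : ℝ := 2 * (m ^ 3 / 3 + m ^ 2 + 2 * m + 2) with hC
  refine ⟨C, by positivity, fun L hL hLm => ?_⟩
  set s : ℝ → ℝ := fun p => Real.sqrt (p ^ 2 + m ^ 2) with hs
  set f : ℝ → ℝ := fun p => p ^ 2 * Real.log (1 - Real.exp (-(L * s p))) with hf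
  have hsm : ∀ p : ℝ, m ≤ s p := fun p =>
    Real.le_sqrt_of_sq_le (by nlinarith [sq_nonneg p])
  have hsp : ∀ p : ℝ, 0 ≤ p → p ≤ s p := fun p _ =>
    Real.le_sqrt_of_sq_le (by nlinarith [sq_nonneg m])
  have hexp_half : ∀ p : ℝ, Real.exp (-(L * s p)) ≤ 1 / 2 := by
    intro p
    have h1 : 1 ≤ L * s p := le_trans hLm (by
      exact mul_le_mul_of_nonneg_left (hsm p) hL.le)
    have : Real.exp (-(L * s p)) ≤ Real.exp (-1) := by
      apply Real.exp_le_exp.mpr; linarith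
    have h2 : Real.exp (-1) ≤ 1 / 2 := by
      rw [Real.exp_neg, inv_le_comm₀ (Real.exp_pos 1) (by norm_num)]
      nlinarith [Real.add_one_le_exp 1]
    linarith
  have hlogb : ∀ p : ℝ, |Real.log (1 - Real.exp (-(L * s p)))| ≤ 2 * Real.exp (-(L * s p)) :=
    fun p => casimir_aux_log_bound (Real.exp_pos _).le (hexp_half p)
  have hcont : Continuous f := by
    rw [continuous_iff_continuousAt]
    intro p
    apply ContinuousAt.mul (by fun_prop)
    refine (Real.continuousAt_log ?_).comp (by fun_prop)
    have := hexp_half p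
    intro h; rw [sub_eq_zero] at h; rw [← h] at this; linarith
  have hIcc : IntegrableOn f (Set.Icc 0 m) := hcont.integrableOn_Icc
  have hgint : IntegrableOn (fun p : ℝ => 2 * (p ^ 2 * Real.exp (-(L * p)))) (Set.Ioi m) :=
    (casimir_aux_keyint L m hL).1.const_mul 2
  have hIoi : IntegrableOn f (Set.Ioi m) := by
    apply Integrable.mono hgint hcont.aestronglyMeasurable.restrict
    filter_upwards [ae_restrict_mem measurableSet_Ioi] with p hp
    have hp0 : 0 ≤ p := le_trans hm.le (le_of_lt hp)
    have hexple : Real.exp (-(L * s p)) ≤ Real.exp (-(L * p)) := by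
      apply Real.exp_le_exp.mpr
      have := mul_le_mul_of_nonneg_left (hsp p hp0) hL.le
      linarith
    rw [Real.norm_eq_abs, Real.norm_eq_abs, hf, abs_mul, abs_pow, sq_abs]
    calc p ^ 2 * |Real.log (1 - Real.exp (-(L * s p)))|
        ≤ p ^ 2 * (2 * Real.exp (-(L * s p))) := by
          apply mul_le_mul_of_nonneg_left (hlogb p) (by positivity)
      _ ≤ 2 * (p ^ 2 * Real.exp (-(L * p))) := by nlinarith [sq_nonneg p]
      _ ≤ |2 * (p ^ 2 * Real.exp (-(L * p)))| := le_abs_self _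
  have hIci : IntegrableOn f (Set.Ici 0) := by
    rw [← Set.Icc_union_Ioi_eq_Ici hm.le]
    exact hIcc.union hIoi
  refine ⟨hIci, ?_⟩
  have habs : ∀ p : ℝ, p ^ 2 * |Real.log (1 - Real.exp (-(L * s p)))| = |f p| := by
    intro p; rw [hf, abs_mul, abs_pow, sq_abs]
  have hdisj : Disjoint (Set.Icc (0:ℝ) m) (Set.Ioi m) :=
    Set.disjoint_left.mpr fun x hx hx' => absurd hx.2 (not_le.mpr hx')
  have hsplit : (∫ p in Set.Ici (0:ℝ), |f p|)
      = (∫ p in Set.Icc (0:ℝ) m, |f p|) + ∫ p in Set.Ioi m, |f p| := by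
    rw [← Set.Icc_union_Ioi_eq_Ici hm.le]
    exact setIntegral_union hdisj measurableSet_Ioi hIcc.abs hIoi.abs
  have hE : (0:ℝ) < Real.exp (-(L * m)) := Real.exp_pos _
  have hb1 : (∫ p in Set.Icc (0:ℝ) m, |f p|)
      ≤ 2 * Real.exp (-(L * m)) * (m ^ 3 / 3) := by
    have hgi : IntegrableOn (fun p : ℝ => 2 * Real.exp (-(L * m)) * p ^ 2) (Set.Icc 0 m) :=
      (Continuous.integrableOn_Icc (by fun_prop))
    calc (∫ p in Set.Icc (0:ℝ) m, |f p|)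
        ≤ ∫ p in Set.Icc (0:ℝ) m, 2 * Real.exp (-(L * m)) * p ^ 2 := by
          apply setIntegral_mono_on hIcc.abs hgi measurableSet_Icc
          intro p hp
          have hexple : Real.exp (-(L * s p)) ≤ Real.exp (-(L * m)) := by
            apply Real.exp_le_exp.mpr
            have := mul_le_mul_of_nonneg_left (hsm p) hL.le
            linarith
          rw [hf, abs_mul, abs_pow, sq_abs]
          calc p ^ 2 * |Real.log (1 - Real.exp (-(L * s p)))|
              ≤ p ^ 2 * (2 * Real.exp (-(L * s p))) :=
                mul_le_mul_of_nonneg_left (hlogb p) (by positivity)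
            _ ≤ 2 * Real.exp (-(L * m)) * p ^ 2 := by nlinarith [sq_nonneg p]
      _ = 2 * Real.exp (-(L * m)) * (m ^ 3 / 3) := by
          rw [integral_const_mul]
          congr 1
          rw [integral_Icc_eq_integral_Ioc, ← intervalIntegral.integral_of_le hm.le]
          simp [integral_pow]
          norm_num
  have hb2 : (∫ p in Set.Ioi m, |f p|)
      ≤ 2 * ((m ^ 2 / L + 2 * m / L ^ 2 + 2 / L ^ 3) * Real.exp (-(L * m))) := by
    calc (∫ p in Set.Ioi m, |f p|)
        ≤ ∫ p in Set.Ioi m, 2 * (p ^ 2 * Real.exp (-(L * p))) := by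
          apply setIntegral_mono_on hIoi.abs hgint measurableSet_Ioi
          intro p hp
          have hp0 : 0 ≤ p := le_trans hm.le (le_of_lt hp)
          have hexple : Real.exp (-(L * s p)) ≤ Real.exp (-(L * p)) := by
            apply Real.exp_le_exp.mpr
            have := mul_le_mul_of_nonneg_left (hsp p hp0) hL.le
            linarith
          rw [hf, abs_mul, abs_pow, sq_abs]
          calc p ^ 2 * |Real.log (1 - Real.exp (-(L * s p)))|
              ≤ p ^ 2 * (2 * Real.exp (-(L * s p))) :=
                mul_le_mul_of_nonneg_left (hlogb p) (by positivity)
            _ ≤ 2 * (p ^ 2 * Real.exp (-(L * p))) := by nlinarith [sq_nonneg p]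
      _ = 2 * ((m ^ 2 / L + 2 * m / L ^ 2 + 2 / L ^ 3) * Real.exp (-(L * m))) := by
          rw [integral_const_mul, (casimir_aux_keyint L m hL).2]
  have key : ∀ u : ℝ, 0 < u →
      2 * m ^ 3 / 3 + 2 * m ^ 2 * u + 4 * m * u ^ 2 + 4 * u ^ 3
        ≤ C * (1 + u + u ^ 2 + u ^ 3) := by
    intro u hu
    have hC1 : 2 * m ^ 3 / 3 ≤ C := by rw [hC]; nlinarith
    have hC2 : 2 * m ^ 2 ≤ C := by rw [hC]; nlinarith
    have hC3 : 4 * m ≤ C := by rw [hC]; nlinarith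
    have hC4 : (4:ℝ) ≤ C := by rw [hC]; nlinarith
    nlinarith [mul_le_mul_of_nonneg_right hC2 hu.le,
      mul_le_mul_of_nonneg_right hC3 (mul_pos hu hu).le,
      mul_le_mul_of_nonneg_right hC4 (mul_pos (mul_pos hu hu) hu).le]
  have hkey := key (1 / L) (by positivity)
  calc (∫ p in Set.Ici (0:ℝ), p ^ 2 * |Real.log (1 - Real.exp (-(L * s p)))|)
      = (∫ p in Set.Ici (0:ℝ), |f p|) := by
        exact setIntegral_congr_fun measurableSet_Ici fun p _ => habs p
    _ = (∫ p in Set.Icc (0:ℝ) m, |f p|) + ∫ p in Set.Ioi m, |f p| := hsplit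
    _ ≤ 2 * Real.exp (-(L * m)) * (m ^ 3 / 3)
        + 2 * ((m ^ 2 / L + 2 * m / L ^ 2 + 2 / L ^ 3) * Real.exp (-(L * m))) :=
        add_le_add hb1 hb2
    _ = Real.exp (-(L * m)) * (2 * m ^ 3 / 3 + 2 * m ^ 2 * (1 / L)
        + 4 * m * (1 / L) ^ 2 + 4 * (1 / L) ^ 3) := by ring
    _ ≤ Real.exp (-(L * m)) * (C * (1 + 1 / L + (1 / L) ^ 2 + (1 / L) ^ 3)) :=
        mul_le_mul_of_nonneg_left hkey hE.le
    _ = C * Real.exp (-(L * m)) * (1 + 1 / L + 1 / L ^ 2 + 1 / L ^ 3) := by ring
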